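/- For every ξ₁ ∈ ℝ with sin ξ₁ ≠ 0, the function t ↦ X(ξ₁, t) is differentiable at t = 0 and its derivative there equals −1. (This expresses the Neumann boundary condition ∂X/∂ξ₂ = −1 on Γ⁰ = {ξ₂ = 0, ξ₁ ≠ π j} satisfied by the boundary-layer function X.) -/

import Mathlib

/-- The boundary-layer function `X(ξ) = Re ln sin z + ln 2 − ξ₂`, `z = ξ₁ + i ξ₂`. -/
noncomputable def boundaryLayerX (ξ : ℝ × ℝ) : ℝ :=
  Real.log ‖Complex.sin ((ξ.1 : ℂ) + (ξ.2 : ℂ) * Complex.I)‖ +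
    Real.log 2 - ξ.2

lemma abs_sin_eq (x y : ℝ) :
    ‖Complex.sin ((x : ℂ) + (y : ℂ) * Complex.I)‖ =
      Real.sqrt (Real.sin x ^ 2 + Real.sinh y ^ 2) := by
  have h : Complex.sin ((x : ℂ) + (y : ℂ) * Complex.I) =
      (Real.sin x * Real.cosh y : ℝ) + (Real.cos x * Real.sinh y : ℝ) * Complex.I := by
    rw [Complex.sin_add, Complex.cos_mul_I, Complex.sin_mul_I]
    push_cast
    ring
  rw [h, Complex.norm_def, Complex.normSq_add_mul_I]
  congr 1
  have h1 := Real.sin_sq_add_cos_sq x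
  have h2 := Real.cosh_sq y
  nlinarith [Real.sinh_sq y]

/-- At every boundary point `(ξ₁, 0)` with `sin ξ₁ ≠ 0`, the function
`t ↦ X(ξ₁, t)` is differentiable at `t = 0` with derivative `−1`:
the Neumann condition `∂X/∂ξ₂ = −1` on `Γ⁰`. -/
theorem boundaryLayerX_neumann (ξ₁ : ℝ) (h : Real.sin ξ₁ ≠ 0) :
    HasDerivAt (fun t => boundaryLayerX (ξ₁, t)) (-1) 0 := by
  have hpos : ∀ t : ℝ, 0 < Real.sin ξ₁ ^ 2 + Real.sinh t ^ 2 := fun t => by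
    have : 0 < Real.sin ξ₁ ^ 2 := by positivity
    nlinarith [sq_nonneg (Real.sinh t)]
  have hfun : (fun t => boundaryLayerX (ξ₁, t)) =
      fun t => Real.log (Real.sin ξ₁ ^ 2 + Real.sinh t ^ 2) / 2 + Real.log 2 - t := by
    funext t
    unfold boundaryLayerX
    rw [abs_sin_eq, Real.log_sqrt (hpos t).le]
  rw [hfun]
  have hu : HasDerivAt (fun t : ℝ => Real.sin ξ₁ ^ 2 + Real.sinh t ^ 2)
      (2 * Real.sinh 0 * Real.cosh 0) 0 := by
    have := ((Real.hasDerivAt_sinh 0).pow 2)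
    simpa [mul_comm, mul_assoc, mul_left_comm] using this.const_add (Real.sin ξ₁ ^ 2)
  have hlog : HasDerivAt (fun t : ℝ => Real.log (Real.sin ξ₁ ^ 2 + Real.sinh t ^ 2))
      (2 * Real.sinh 0 * Real.cosh 0 / (Real.sin ξ₁ ^ 2 + Real.sinh 0 ^ 2)) 0 :=
    hu.log (hpos 0).ne'
  have := ((hlog.div_const 2).add_const (Real.log 2)).sub (hasDerivAt_id' (x := 0))
  simpa [Pi.sub_def] using this
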